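/- arXiv:1601.03987 — 2 statements merged into one kernel-verified Lean document; each statement's English description precedes it below -/
import Mathlib

section
/- Let k ≥ 1 and let t, a, u, b be positive integers with b ≤ a, u ≤ t, t ≤ m, t + a ≤ n + 1 and u + b ≤ n + 1. Let M be a monomial lying in J_u(b)^k ∩ J_t(a), and let F be the lexicographically smallest diagonal of type (t,a) dividing M. Then M/F ∈ J_u(b)^{k−1}. -/
open MvPolynomial

/-- Admissible column selections for a diagonal of type `(t,a)`:
strictly increasing columns, all with (1-indexed) column number `≥ a`. -/
def NEcols (n t a : ℕ) (c : Fin t → Fin n) : Prop :=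
  StrictMono c ∧ ∀ j, a ≤ (c j : ℕ) + 1

/-- The diagonal monomial `x_{1 b₁} ⋯ x_{t b_t}` with columns `c`. -/
noncomputable def diagP (K : Type*) [Field K] (m n : ℕ) {t : ℕ} (c : Fin t → Fin n) :
    MvPolynomial (Fin m × Fin n) K :=
  ∏ j : Fin t,
    if h : (j : ℕ) < m then (X (⟨(j : ℕ), h⟩, c j) : MvPolynomial (Fin m × Fin n) K) else 0

/-- The monomial ideal `J_t(a)` generated by the diagonals of type `(t,a)`. -/
noncomputable def JIdeal (K : Type*) [Field K] (m n t a : ℕ) :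
    Ideal (MvPolynomial (Fin m × Fin n) K) :=
  Ideal.span {f | ∃ c : Fin t → Fin n, NEcols n t a c ∧ f = diagP K m n c}

section Aux

variable {K : Type*} [Field K] {m n : ℕ}

/-- The exponent vector of the diagonal with columns `c`. -/
noncomputable def dExp (m n : ℕ) {t : ℕ} (ht : t ≤ m) (c : Fin t → Fin n) :
    (Fin m × Fin n) →₀ ℕ :=
  ∑ j : Fin t, Finsupp.single (⟨(j : ℕ), lt_of_lt_of_le j.isLt ht⟩, c j) 1

lemma dExp_apply {t : ℕ} (ht : t ≤ m) (c : Fin t → Fin n) (i : Fin m) (q : Fin n) :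
    dExp m n ht c (i, q) = if h : (i : ℕ) < t then (if c ⟨i, h⟩ = q then 1 else 0) else 0 := by
  classical
  rw [dExp, Finsupp.finset_sum_apply]
  by_cases h : (i : ℕ) < t
  · rw [dif_pos h, Finset.sum_eq_single (⟨(i : ℕ), h⟩ : Fin t)]
    · simp [Finsupp.single_apply, Prod.ext_iff]
    · intro j _ hj
      rw [Finsupp.single_apply, if_neg]
      simp only [Prod.mk.injEq, not_and]
      intro hrow
      exact absurd (Fin.ext (by simpa [Fin.ext_iff] using hrow) : j = ⟨(i : ℕ), h⟩) hj
    · simp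
  · rw [dif_neg h]
    apply Finset.sum_eq_zero
    intro j _
    rw [Finsupp.single_apply, if_neg]
    simp only [Prod.mk.injEq, not_and]
    intro hrow
    have : (i : ℕ) = (j : ℕ) := by rw [← hrow]
    exact fun _ => h (this ▸ j.isLt)

lemma prod_monomial {ι : Type*} (s : Finset ι) (e : ι → ((Fin m × Fin n) →₀ ℕ)) :
    (∏ j ∈ s, (monomial (e j) (1 : K))) = monomial (∑ j ∈ s, e j) 1 := by
  classical
  induction s using Finset.induction with
  | empty => simp
  | insert _ _ h ih => rw [Finset.prod_insert h, Finset.sum_insert h, ih, monomial_mul, one_mul]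

lemma diagP_eq {t : ℕ} (ht : t ≤ m) (c : Fin t → Fin n) :
    diagP K m n c = monomial (dExp m n ht c) 1 := by
  rw [diagP, dExp, ← prod_monomial]
  apply Finset.prod_congr rfl
  intro j _
  rw [dif_pos (lt_of_lt_of_le j.isLt ht), X]

end Aux

section Aux2
variable {K : Type*} [Field K] {m n : ℕ}

lemma JIdeal_eq_span (t a : ℕ) (ht : t ≤ m) :
    JIdeal K m n t a = Ideal.span ((fun s => monomial s (1 : K)) ''
      {e | ∃ c : Fin t → Fin n, NEcols n t a c ∧ e = dExp m n ht c}) := by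
  rw [JIdeal]
  congr 1
  ext f
  constructor
  · rintro ⟨c, hc, rfl⟩
    exact ⟨dExp m n ht c, ⟨c, hc, rfl⟩, (diagP_eq ht c).symm⟩
  · rintro ⟨e, ⟨c, hc, rfl⟩, rfl⟩
    exact ⟨c, hc, (diagP_eq ht c).symm⟩

lemma JIdeal_pow_eq_span (t a : ℕ) (ht : t ≤ m) (k : ℕ) :
    JIdeal K m n t a ^ k = Ideal.span ((fun s => monomial s (1 : K)) ''
      {e | ∃ δ : Fin k → Fin t → Fin n, (∀ s, NEcols n t a (δ s)) ∧
        e = ∑ s, dExp m n ht (δ s)}) := by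
  induction k with
  | zero =>
    have hset : {e : (Fin m × Fin n) →₀ ℕ | ∃ δ : Fin 0 → Fin t → Fin n,
        (∀ s, NEcols n t a (δ s)) ∧ e = ∑ s, dExp m n ht (δ s)} = {0} := by
      ext e
      simp only [Set.mem_setOf_eq, Set.mem_singleton_iff]
      constructor
      · rintro ⟨δ, -, rfl⟩; simp
      · rintro rfl; exact ⟨Fin.elim0, fun s => s.elim0, by simp⟩
    rw [pow_zero, hset]
    simp only [Set.image_singleton, monomial_zero', C_1]
    rw [Ideal.span_singleton_one, Ideal.one_eq_top]
  | succ k ih =>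
    rw [pow_succ, ih, JIdeal_eq_span t a ht, Ideal.span_mul_span']
    congr 1
    ext x
    constructor
    · rintro ⟨x1, ⟨e1, ⟨δ, hδ, rfl⟩, rfl⟩, x2, ⟨e2, ⟨c, hc, rfl⟩, rfl⟩, rfl⟩
      refine ⟨(∑ s, dExp m n ht (δ s)) + dExp m n ht c, ⟨Fin.snoc δ c, ?_, ?_⟩, ?_⟩
      · intro s
        refine Fin.lastCases ?_ ?_ s
        · simpa using hc
        · intro i; simpa using hδ i
      · rw [Fin.sum_univ_castSucc]
        simp
      · show monomial _ (1 : K) = monomial _ 1 * monomial _ 1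
        rw [monomial_mul, one_mul]
    · rintro ⟨e, ⟨δ, hδ, rfl⟩, rfl⟩
      refine ⟨monomial (∑ s : Fin k, dExp m n ht (δ s.castSucc)) 1,
        ⟨_, ⟨fun s => δ s.castSucc, fun s => hδ _, rfl⟩, rfl⟩,
        monomial (dExp m n ht (δ (Fin.last k))) 1,
        ⟨_, ⟨δ (Fin.last k), hδ _, rfl⟩, rfl⟩, ?_⟩
      show monomial _ 1 * monomial _ 1 = monomial _ (1 : K)
      rw [monomial_mul, one_mul]
      rw [(Fin.sum_univ_castSucc fun s => dExp m n ht (δ s)).symm]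

lemma monomial_mem_JIdeal_pow_iff (t a : ℕ) (ht : t ≤ m) (k : ℕ) (d : (Fin m × Fin n) →₀ ℕ) :
    monomial d (1 : K) ∈ JIdeal K m n t a ^ k ↔
      ∃ δ : Fin k → Fin t → Fin n, (∀ s, NEcols n t a (δ s)) ∧
        (∑ s, dExp m n ht (δ s)) ≤ d := by
  classical
  rw [JIdeal_pow_eq_span t a ht k, mem_ideal_span_monomial_image]
  rw [support_monomial, if_neg (one_ne_zero)]
  constructor
  · intro h
    obtain ⟨si, ⟨δ, hδ, rfl⟩, hle⟩ := h d (Finset.mem_singleton_self d)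
    exact ⟨δ, hδ, hle⟩
  · rintro ⟨δ, hδ, hle⟩ xi hxi
    rw [Finset.mem_singleton] at hxi
    subst hxi
    exact ⟨_, ⟨δ, hδ, rfl⟩, hle⟩

lemma dExp_le_iff {t : ℕ} (ht : t ≤ m) (c : Fin t → Fin n) (d : (Fin m × Fin n) →₀ ℕ) :
    dExp m n ht c ≤ d ↔ ∀ j : Fin t, 1 ≤ d (⟨(j : ℕ), lt_of_lt_of_le j.isLt ht⟩, c j) := by
  rw [Finsupp.le_def]
  constructor
  · intro h j
    refine le_trans ?_ (h (⟨(j : ℕ), lt_of_lt_of_le j.isLt ht⟩, c j))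
    rw [dExp_apply, dif_pos j.isLt]
    simp
  · intro h p
    obtain ⟨i, q⟩ := p
    rw [dExp_apply]
    split
    · next hi =>
      split
      · next hc => simpa [← hc] using h ⟨(i : ℕ), hi⟩
      · simp
    · simp

lemma sum_dExp_apply {t k : ℕ} (ht : t ≤ m) (δ : Fin k → Fin t → Fin n) (i : Fin m) (q : Fin n) :
    (∑ s, dExp m n ht (δ s)) (i, q) =
      if h : (i : ℕ) < t then (Finset.univ.filter fun s => δ s ⟨(i : ℕ), h⟩ = q).card else 0 := by
  classical
  rw [Finsupp.finset_sum_apply]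
  by_cases h : (i : ℕ) < t
  · rw [dif_pos h, Finset.card_filter]
    apply Finset.sum_congr rfl
    intro s _
    rw [dExp_apply, dif_pos h]
  · rw [dif_neg h]
    apply Finset.sum_eq_zero
    intro s _
    rw [dExp_apply, dif_neg h]

end Aux2

section Comb

lemma card_filter_perm {k : ℕ} (σ : Equiv.Perm (Fin k)) (pr : Fin k → Prop) [DecidablePred pr] :
    (Finset.univ.filter fun s => pr (σ s)).card = (Finset.univ.filter pr).card := by
  apply Finset.card_bij (fun s _ => σ s)
  · intro s hs
    simp only [Finset.mem_filter, Finset.mem_univ, true_and] at hs ⊢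
    exact hs
  · intro s1 _ s2 _ h
    exact σ.injective h
  · intro s hs
    simp only [Finset.mem_filter, Finset.mem_univ, true_and] at hs
    exact ⟨σ.symm s, by simp [hs], by simp⟩

lemma perm_dominate {k : ℕ} {α : Type*} [LinearOrder α] {f g : Fin k → α}
    (hf : Monotone f) (hg : Monotone g) (σ : Equiv.Perm (Fin k))
    (h : ∀ s, f s < g (σ s)) : ∀ s, f s < g s := by
  intro s
  have hex : ∃ x, s ≤ x ∧ σ x ≤ s := by
    by_contra hcon
    push_neg at hcon
    have hinj : ∀ x ∈ Finset.Ici s, σ x ∈ Finset.Ioi s := by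
      intro x hx
      rw [Finset.mem_Ici] at hx
      rw [Finset.mem_Ioi]
      exact hcon x hx
    have hcard := Finset.card_le_card_of_injOn (fun x => σ x) hinj (σ.injective.injOn)
    rw [Fin.card_Ici, Fin.card_Ioi] at hcard
    have := s.isLt
    omega
  obtain ⟨x, hsx, hxs⟩ := hex
  exact lt_of_le_of_lt (hf hsx) (lt_of_lt_of_le (h x) (hg hxs))

/-- The increasing embedding of `Fin (k-1)` into `Fin k` skipping position `p`. -/
def remIdx (k p : ℕ) (hpk : p < k) (s : Fin (k - 1)) : Fin k :=
  if (s : ℕ) < p then ⟨(s : ℕ), lt_of_lt_of_le s.isLt (Nat.sub_le k 1)⟩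
  else ⟨(s : ℕ) + 1, by have := s.isLt; omega⟩

lemma remIdx_val (k p : ℕ) (hpk : p < k) (s : Fin (k - 1)) :
    (remIdx k p hpk s : ℕ) = if (s : ℕ) < p then (s : ℕ) else (s : ℕ) + 1 := by
  rw [remIdx]; split <;> rfl

lemma card_filter_remIdx {k p : ℕ} (hpk : p < k) (pr : Fin k → Prop) [DecidablePred pr] :
    (Finset.univ.filter fun s : Fin (k - 1) => pr (remIdx k p hpk s)).card
      + (if pr ⟨p, hpk⟩ then 1 else 0) = (Finset.univ.filter pr).card := by
  classical
  have hbij : (Finset.univ.filter fun s : Fin (k - 1) => pr (remIdx k p hpk s)).card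
      = ((Finset.univ.erase (⟨p, hpk⟩ : Fin k)).filter pr).card := by
    apply Finset.card_bij (fun s _ => remIdx k p hpk s)
    · intro s hs
      simp only [Finset.mem_filter, Finset.mem_univ, true_and] at hs
      simp only [Finset.mem_filter, Finset.mem_erase, Finset.mem_univ, and_true]
      refine ⟨?_, hs⟩
      intro hcon
      have hv : (remIdx k p hpk s : ℕ) = p := by rw [hcon]
      rw [remIdx_val] at hv
      split at hv <;> omega
    · intro s1 _ s2 _ h
      have hv : (remIdx k p hpk s1 : ℕ) = (remIdx k p hpk s2 : ℕ) := by rw [h]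
      rw [remIdx_val, remIdx_val] at hv
      apply Fin.ext
      split at hv <;> split at hv <;> omega
    · intro x hx
      simp only [Finset.mem_filter, Finset.mem_erase, Finset.mem_univ, and_true, true_and] at hx
      obtain ⟨hxp, hprx⟩ := hx
      have hxp' : (x : ℕ) ≠ p := fun h => hxp (Fin.ext h)
      by_cases hlt : (x : ℕ) < p
      · have hx0 : (x : ℕ) < k - 1 := by omega
        have hre : remIdx k p hpk ⟨(x : ℕ), hx0⟩ = x := by
          apply Fin.ext
          rw [remIdx_val]
          simp [hlt]
        exact ⟨⟨(x : ℕ), hx0⟩, by simp [hre, hprx], hre⟩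
      · have hgt : p < (x : ℕ) := by omega
        have hx1 : (x : ℕ) - 1 < k - 1 := by have := x.isLt; omega
        have hre : remIdx k p hpk ⟨(x : ℕ) - 1, hx1⟩ = x := by
          apply Fin.ext
          rw [remIdx_val]
          simp only
          split <;> omega
        exact ⟨⟨(x : ℕ) - 1, hx1⟩, by simp [hre, hprx], hre⟩
  rw [hbij]
  conv_rhs => rw [← Finset.insert_erase (Finset.mem_univ (⟨p, hpk⟩ : Fin k)),
    Finset.filter_insert]
  split
  · rw [Finset.card_insert_of_notMem (fun hc => by
      simp only [Finset.mem_filter, Finset.mem_erase] at hc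
      exact hc.1.1 rfl)]
  · simp

/-- Core combinatorial lemma: from `k` strictly increasing chains bounded by counts `D`,
remove one and produce `k-1` chains whose counts fit in `D` minus one copy of each `f i`. -/
lemma core_comb {n k u : ℕ} (hk : 1 ≤ k)
    (f : Fin u → Fin n) (δ : Fin k → Fin u → Fin n) (hδ : ∀ s, StrictMono (δ s))
    (D : Fin u → Fin n → ℕ)
    (hfD : ∀ i, 1 ≤ D i (f i))
    (hcount : ∀ i q, (Finset.univ.filter fun s : Fin k => δ s i = q).card ≤ D i q)
    (hgap : ∀ (i j : Fin u), (i : ℕ) + 1 = (j : ℕ) → ∀ q : Fin n,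
      f i < q → q < f j → D i q = 0) :
    ∃ ε : Fin (k - 1) → Fin u → Fin n,
      (∀ s, StrictMono (ε s)) ∧
      (∀ s i, ∃ s', ε s i = δ s' i) ∧
      (∀ i q, (Finset.univ.filter fun s : Fin (k - 1) => ε s i = q).card
          ≤ D i q - (if f i = q then 1 else 0)) := by
  classical
  -- every chain entry occurs, hence has positive count
  have hone : ∀ (s : Fin k) (i : Fin u), 1 ≤ D i (δ s i) := by
    intro s i
    refine le_trans ?_ (hcount i (δ s i))
    exact Finset.card_pos.2 ⟨s, by simp⟩
  -- propagation of being above the f-diagonal, one step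
  have step : ∀ (i j : Fin u) (s : Fin k), (i : ℕ) + 1 = (j : ℕ) →
      f i < δ s i → f j < δ s j := by
    intro i j s hij hlt
    have hij' : i < j := by rw [Fin.lt_def]; omega
    have h3 : δ s i < δ s j := hδ s hij'
    by_contra hcon
    push_neg at hcon
    have h2 : δ s i < f j := lt_of_lt_of_le h3 hcon
    have hg := hgap i j hij (δ s i) hlt h2
    have ho := hone s i
    omega
  -- propagation, many steps
  have keygen : ∀ (p : ℕ) (i j : Fin u) (s : Fin k), (i : ℕ) + p = (j : ℕ) →
      f i < δ s i → f j < δ s j := by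
    intro p
    induction p with
    | zero =>
      intro i j s h hlt
      have : i = j := Fin.ext (by omega)
      subst this; exact hlt
    | succ p ih =>
      intro i j s h hlt
      have hmid : (i : ℕ) + p < u := by have := j.isLt; omega
      exact step ⟨(i : ℕ) + p, hmid⟩ j s (by simp; omega) (ih i ⟨(i : ℕ) + p, hmid⟩ s rfl hlt)
  -- the count of chain entries below the diagonal, per row
  set L : Fin u → ℕ := fun i => (Finset.univ.filter fun s : Fin k => δ s i ≤ f i).card with hLdef
  have hLk : ∀ i, L i ≤ k := by
    intro i
    rw [hLdef]
    exact le_trans (Finset.card_filter_le _ _) (by simp)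
  have hLmono : ∀ (i j : Fin u), i ≤ j → L j ≤ L i := by
    intro i j hij
    rw [hLdef]
    apply Finset.card_le_card
    intro s hs
    simp only [Finset.mem_filter, Finset.mem_univ, true_and] at hs ⊢
    by_contra hcon
    push_neg at hcon
    exact absurd (keygen ((j : ℕ) - (i : ℕ)) i j s (by omega) hcon) (not_lt.2 hs)
  -- sorted rows
  set w : Fin u → Fin k → Fin n :=
    fun i => (fun s => δ s i) ∘ Tuple.sort (fun s => δ s i) with hwdef
  have hwmono : ∀ i, Monotone (w i) := fun i => Tuple.monotone_sort _
  have hwlt : ∀ (i j : Fin u), i < j → ∀ x, w i x < w j x := by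
    intro i j hij
    apply perm_dominate (hwmono i) (hwmono j)
      ((Tuple.sort (fun s => δ s i)).trans (Tuple.sort (fun s => δ s j)).symm)
    intro x
    show δ (Tuple.sort (fun s => δ s i) x) i
      < δ (Tuple.sort (fun s => δ s j) ((Tuple.sort (fun s => δ s j)).symm _)) j
    rw [Equiv.apply_symm_apply]
    exact hδ _ hij
  have hcnt : ∀ (i : Fin u) (pr : Fin n → Prop) [DecidablePred pr],
      (Finset.univ.filter fun x => pr (w i x)).card
        = (Finset.univ.filter fun s => pr (δ s i)).card := by
    intro i pr _
    rw [hwdef]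
    exact card_filter_perm (Tuple.sort fun s => δ s i) (fun s => pr (δ s i))
  have hLpos : ∀ (i : Fin u) (x : Fin k), w i x ≤ f i ↔ (x : ℕ) < L i := by
    intro i x
    have h1 := Tuple.lt_card_le_iff_apply_le_of_monotone (f := w i) (a := f i) (j := x) (hwmono i)
    have hcard : (Finset.univ.filter fun s => w i s ≤ f i).card = L i := by
      rw [hLdef]
      convert hcnt i (fun q => q ≤ f i)
    rw [hcard] at h1
    exact h1.symm
  have hpk : ∀ i : Fin u, L i - 1 < k := by
    intro i
    have := hLk i
    omega
  refine ⟨fun s i => w i (remIdx k (L i - 1) (hpk i) s), ?_, ?_, ?_⟩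
  · -- strict monotonicity of the new chains
    intro s i j hij
    have hpij : L j - 1 ≤ L i - 1 := by
      have := hLmono i j (le_of_lt hij)
      omega
    simp only
    rw [remIdx, remIdx]
    by_cases h1 : (s : ℕ) < L j - 1
    · rw [if_pos (lt_of_lt_of_le h1 hpij), if_pos h1]
      exact hwlt i j hij _
    · by_cases h2 : (s : ℕ) < L i - 1
      · rw [if_pos h2, if_neg h1]
        exact lt_of_lt_of_le (hwlt i j hij ⟨(s : ℕ), _⟩)
          (hwmono j (by rw [Fin.le_def]; simp))
      · rw [if_neg h2, if_neg h1]
        exact hwlt i j hij _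
  · -- new chain entries are old chain entries
    intro s i
    exact ⟨Tuple.sort (fun s => δ s i) (remIdx k (L i - 1) (hpk i) s), rfl⟩
  · -- the counting bound
    intro i q
    show (Finset.univ.filter fun s : Fin (k - 1) =>
        w i (remIdx k (L i - 1) (hpk i) s) = q).card ≤ D i q - (if f i = q then 1 else 0)
    have hkey := card_filter_remIdx (hpk i) (fun x => w i x = q)
    have hcw := hcnt i (fun x => x = q)
    have hcV := hcount i q
    by_cases hfq : f i = q
    · rw [if_pos hfq]
      by_cases hex : ∃ x, w i x = q
      · obtain ⟨x, hx⟩ := hex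
        have hxL : (x : ℕ) < L i := (hLpos i x).1 (le_of_eq (by rw [hx, hfq]))
        have hL1 : 1 ≤ L i := by omega
        have hPle : w i ⟨L i - 1, hpk i⟩ ≤ f i := (hLpos i _).2 (by simp; omega)
        have hPge : ¬ w i ⟨L i - 1, hpk i⟩ < f i := by
          intro hcon
          have hxj : w i x ≤ w i ⟨L i - 1, hpk i⟩ :=
            hwmono i (by rw [Fin.le_def]; simp; omega)
          rw [hx, ← hfq] at hxj
          exact absurd (lt_of_le_of_lt hxj hcon) (lt_irrefl _)
        have hPq : w i ⟨L i - 1, hpk i⟩ = q := by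
          rw [← hfq]; exact le_antisymm hPle (not_lt.1 hPge)
        rw [if_pos hPq] at hkey
        rw [hcw] at hkey
        omega
      · push_neg at hex
        have h0 : (Finset.univ.filter fun x : Fin k => w i x = q).card = 0 := by
          rw [Finset.card_eq_zero, Finset.filter_eq_empty_iff]
          intro x _
          exact hex x
        rw [hcw] at h0
        have hD1 : 1 ≤ D i q := hfq ▸ hfD i
        split at hkey <;> omega
    · rw [if_neg hfq]
      rw [hcw] at hkey
      split at hkey <;> omega


end Comb

/-- `c` gives the lexicographically smallest diagonal of type `(t,a)` dividing the
monomial `M`: the diagonal is of type `(t,a)`, divides `M`, and its column sequence is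
lexicographically greatest among all diagonals of type `(t,a)` dividing `M`. -/
def IsSmallestDiagDividing (K : Type*) [Field K] (m n : ℕ) (t a : ℕ)
    (M : MvPolynomial (Fin m × Fin n) K) (c : Fin t → Fin n) : Prop :=
  NEcols n t a c ∧ diagP K m n c ∣ M ∧
    ∀ c' : Fin t → Fin n, NEcols n t a c' → diagP K m n c' ∣ M →
      c' = c ∨ ∃ j : Fin t, (∀ i < j, c' i = c i) ∧ c' j < c j

/-- Lemma `harder`. Let `b ≤ a`, `u ≤ t`, `k ≥ 1`. If the monomial
`M = X^d` lies in `J_u(b)^k ∩ J_t(a)` and `F` is the lexicographically smallest diagonal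
of type `(t,a)` dividing `M`, then `M/F ∈ J_u(b)^{k-1}`. -/
theorem quotient_mem_pow_pred_of_smallest_diag (K : Type*) [Field K] (m n : ℕ)
    (hm : 1 ≤ m) (hmn : m ≤ n) (k t a u b : ℕ)
    (hk : 1 ≤ k) (hu : 1 ≤ u) (hb : 1 ≤ b) (hba : b ≤ a) (hut : u ≤ t) (htm : t ≤ m)
    (hta : t + a ≤ n + 1) (hub : u + b ≤ n + 1)
    (d : (Fin m × Fin n) →₀ ℕ)
    (hM : monomial d (1 : K) ∈ JIdeal K m n u b ^ k ⊓ JIdeal K m n t a)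
    (c : Fin t → Fin n)
    (hc : IsSmallestDiagDividing K m n t a (monomial d (1 : K)) c) :
    ∀ g : MvPolynomial (Fin m × Fin n) K,
      monomial d (1 : K) = diagP K m n c * g → g ∈ JIdeal K m n u b ^ (k - 1) := by
  classical
  intro g hg
  obtain ⟨⟨hcS, hcCol⟩, hcdvd, hcmin⟩ := hc
  have hum : u ≤ m := le_trans hut htm
  have hdvd_iff : ∀ {t' : ℕ} (ht' : t' ≤ m) (c' : Fin t' → Fin n),
      (diagP K m n c' ∣ monomial d (1 : K)) ↔ dExp m n ht' c' ≤ d := by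
    intro t' ht' c'
    rw [diagP_eq ht', monomial_dvd_monomial]
    simp
  have hcd : dExp m n htm c ≤ d := (hdvd_iff htm c).1 hcdvd
  have hgeq : g = monomial (d - dExp m n htm c) (1 : K) := by
    have hne : diagP K m n c ≠ 0 := by
      rw [diagP_eq htm]
      intro h
      exact one_ne_zero ((monomial_eq_zero).1 h)
    apply mul_left_cancel₀ hne
    rw [← hg, diagP_eq htm, monomial_mul, one_mul, add_tsub_cancel_of_le hcd]
  rw [hgeq, monomial_mem_JIdeal_pow_iff u b hum (k - 1)]
  -- pointwise maximality of c among diagonals of type (t,a) dividing M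
  have hmax : ∀ c' : Fin t → Fin n, NEcols n t a c' → dExp m n htm c' ≤ d →
      ∀ i, c' i ≤ c i := by
    intro c' hN hle i₀
    by_contra hcon
    push_neg at hcon
    set c'' : Fin t → Fin n := fun i => if i < i₀ then c i else c' i with hc''
    have hN'' : NEcols n t a c'' := by
      constructor
      · intro x y hxy
        rw [hc'']
        simp only
        by_cases hx : x < i₀ <;> by_cases hy : y < i₀
        · rw [if_pos hx, if_pos hy]; exact hcS hxy
        · rw [if_pos hx, if_neg hy]
          exact lt_of_lt_of_le (lt_trans (hcS hx) hcon) (hN.1.monotone (not_lt.1 hy))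
        · exact absurd (lt_trans hxy hy) hx
        · rw [if_neg hx, if_neg hy]; exact hN.1 hxy
      · intro j
        rw [hc'']
        simp only
        split
        · exact hcCol j
        · exact hN.2 j
    have hle'' : dExp m n htm c'' ≤ d := by
      rw [dExp_le_iff]
      intro j
      rw [hc'']
      simp only
      split
      · exact (dExp_le_iff htm c d).1 hcd j
      · exact (dExp_le_iff htm c' d).1 hle j
    rcases hcmin c'' hN'' ((hdvd_iff htm c'').2 hle'') with heq | ⟨j, hjlt, hjsm⟩
    · have h1 := congrFun heq i₀
      rw [hc''] at h1
      simp only [lt_irrefl, if_false] at h1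
      exact absurd h1.le (not_le.2 hcon)
    · by_cases hj : j < i₀
      · have h1 : c'' j = c j := by rw [hc'']; simp [hj]
        rw [h1] at hjsm
        exact lt_irrefl _ hjsm
      · by_cases hj2 : i₀ < j
        · have h1 := hjlt i₀ hj2
          rw [hc''] at h1
          simp only [lt_irrefl, if_false] at h1
          exact absurd h1.le (not_le.2 hcon)
        · have hji : j = i₀ := le_antisymm (not_lt.1 hj2) (not_lt.1 hj)
          subst hji
          rw [hc''] at hjsm
          simp only [lt_irrefl, if_false] at hjsm
          exact absurd hjsm (not_lt.2 hcon.le)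
  -- gap property
  have hgapT : ∀ (i : Fin t) (hi : (i : ℕ) + 1 < t) (q : Fin n),
      c i < q → q < c ⟨(i : ℕ) + 1, hi⟩ →
      d (⟨(i : ℕ), lt_of_lt_of_le i.isLt htm⟩, q) = 0 := by
    intro i hi q h1 h2
    by_contra hne
    have hdq : 1 ≤ d (⟨(i : ℕ), lt_of_lt_of_le i.isLt htm⟩, q) := Nat.one_le_iff_ne_zero.2 hne
    have hN'' : NEcols n t a (Function.update c i q) := by
      constructor
      · intro x y hxy
        by_cases hx : x = i <;> by_cases hy : y = i
        · rw [hx, hy] at hxy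
          exact absurd hxy (lt_irrefl _)
        · rw [hx, Function.update_self, Function.update_of_ne hy]
          have hiy : i < y := hx ▸ hxy
          have hle : (⟨(i : ℕ) + 1, hi⟩ : Fin t) ≤ y := by
            rw [Fin.le_def]
            show (i : ℕ) + 1 ≤ (y : ℕ)
            exact hiy
          exact lt_of_lt_of_le h2 (hcS.monotone hle)
        · rw [Function.update_of_ne hx, hy, Function.update_self]
          have hxi : x < i := hy ▸ hxy
          exact lt_trans (hcS hxi) h1
        · rw [Function.update_of_ne hx, Function.update_of_ne hy]
          exact hcS hxy
      · intro j
        by_cases hj : j = i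
        · rw [hj, Function.update_self]
          have h3 := hcCol i
          have h4 : (c i : ℕ) < (q : ℕ) := h1
          omega
        · rw [Function.update_of_ne hj]
          exact hcCol j
    have hle'' : dExp m n htm (Function.update c i q) ≤ d := by
      rw [dExp_le_iff]
      intro j
      by_cases hj : j = i
      · rw [hj, Function.update_self]
        exact hdq
      · rw [Function.update_of_ne hj]
        exact (dExp_le_iff htm c d).1 hcd j
    have h5 := hmax (Function.update c i q) hN'' hle'' i
    rw [Function.update_self] at h5
    exact absurd h5 (not_le.2 h1)
  -- extract the k chains
  obtain ⟨δ, hδN, hδle⟩ := (monomial_mem_JIdeal_pow_iff u b hum k d).1 hM.1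
  -- data for the core lemma
  have hfD : ∀ i : Fin u,
      1 ≤ d (⟨(i : ℕ), lt_of_lt_of_le i.isLt hum⟩, c (Fin.castLE hut i)) := by
    intro i
    exact (dExp_le_iff htm c d).1 hcd (Fin.castLE hut i)
  have hcount : ∀ (i : Fin u) (q : Fin n),
      (Finset.univ.filter fun s : Fin k => δ s i = q).card
        ≤ d (⟨(i : ℕ), lt_of_lt_of_le i.isLt hum⟩, q) := by
    intro i q
    have h1 := sum_dExp_apply hum δ (⟨(i : ℕ), lt_of_lt_of_le i.isLt hum⟩ : Fin m) q
    rw [dif_pos (show ((⟨(i : ℕ), lt_of_lt_of_le i.isLt hum⟩ : Fin m) : ℕ) < u from i.isLt)]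
      at h1
    exact le_trans (le_of_eq h1.symm) (Finsupp.le_def.1 hδle _)
  have hgapU : ∀ (i j : Fin u), (i : ℕ) + 1 = (j : ℕ) → ∀ q : Fin n,
      c (Fin.castLE hut i) < q → q < c (Fin.castLE hut j) →
      d (⟨(i : ℕ), lt_of_lt_of_le i.isLt hum⟩, q) = 0 := by
    intro i j hij q h1 h2
    have hi : (i : ℕ) + 1 < t := by
      have := j.isLt
      omega
    have h2' : q < c ⟨(Fin.castLE hut i : ℕ) + 1, hi⟩ := by
      have hcast : (⟨(Fin.castLE hut i : ℕ) + 1, hi⟩ : Fin t) = Fin.castLE hut j :=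
        Fin.ext (by simp [← hij])
      rw [hcast]
      exact h2
    exact hgapT (Fin.castLE hut i) hi q h1 h2'
  obtain ⟨ε, hεmono, hεold, hεcount⟩ := core_comb hk (fun i => c (Fin.castLE hut i)) δ
    (fun s => (hδN s).1) (fun i q => d (⟨(i : ℕ), lt_of_lt_of_le i.isLt hum⟩, q))
    hfD hcount hgapU
  refine ⟨ε, ?_, ?_⟩
  · intro s
    refine ⟨hεmono s, ?_⟩
    intro i
    obtain ⟨s', hs'⟩ := hεold s i
    rw [hs']
    exact (hδN s').2 i
  · rw [Finsupp.le_def]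
    intro p
    obtain ⟨i, q⟩ := p
    rw [Finsupp.tsub_apply, sum_dExp_apply]
    by_cases hiu : (i : ℕ) < u
    · rw [dif_pos hiu]
      have h1 := hεcount ⟨(i : ℕ), hiu⟩ q
      have h2 : dExp m n htm c (i, q)
          = if c ⟨(i : ℕ), lt_of_lt_of_le hiu hut⟩ = q then 1 else 0 := by
        rw [dExp_apply, dif_pos (lt_of_lt_of_le hiu hut)]
      rw [h2]
      exact h1
    · rw [dif_neg hiu]
      exact Nat.zero_le _
end

section
/- Let S = ((t_1,a_1),…,(t_w,a_w)) be a NE-pattern ordered so that a_i ≤ a_j for i < j and t_i ≥ t_j whenever i < j and a_i = a_j, and let M·Δ, Δ = δ_1⋯δ_w, be a NE-tableau of pattern S that is not S-canonical. Then at least one of the following holds: (1) there exist a variable x_{ij} dividing M and an index k such that x_{ij}·δ_k is not a canonical NE-tableau of the one-element pattern ((t_k,a_k)); or (2) there exist indices q < k such that δ_q·δ_k is not a canonical NE-tableau of the pattern ((t_q,a_q),(t_k,a_k)). -/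
open MvPolynomial

/-- The `t`-minor of the generic `m × n` matrix of indeterminates with rows `1,…,t`
(0-indexed `0,…,t-1`) and columns given by `c`. -/
noncomputable def minorP (K : Type*) [Field K] (m n : ℕ) {t : ℕ} (c : Fin t → Fin n) :
    MvPolynomial (Fin m × Fin n) K :=
  Matrix.det (Matrix.of fun i j : Fin t =>
    if h : (i : ℕ) < m then (X (⟨(i : ℕ), h⟩, c j) : MvPolynomial (Fin m × Fin n) K) else 0)

/-- The northeast ideal `I_t(a)`, generated by the `t`-minors of `X_t(a)`. -/
noncomputable def NEIdeal (K : Type*) [Field K] (m n t a : ℕ) :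
    Ideal (MvPolynomial (Fin m × Fin n) K) :=
  Ideal.span {f | ∃ c : Fin t → Fin n, NEcols n t a c ∧ f = minorP K m n c}

/-- A valid pair `(t,a)`: `1 ≤ t`, `1 ≤ a`, `t ≤ m`, `t + a ≤ n + 1`. -/
def ValidPair (m n : ℕ) (p : ℕ × ℕ) : Prop :=
  1 ≤ p.1 ∧ 1 ≤ p.2 ∧ p.1 ≤ m ∧ p.1 + p.2 ≤ n + 1

/-- Canonicity condition for the NE-tableau `X^d · δ_1 ⋯ δ_w` of pattern
`((t 0, a 0), …, (t (w-1), a (w-1)))`, where `δ_j` is the minor with columns `c j`: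
for every `j`, the diagonal `in(δ_j)` is the lexicographically smallest diagonal of type
`(t j, a j)` dividing the monomial `X^d · in(δ_1) ⋯ in(δ_j)`. -/
def CanonicalData (K : Type*) [Field K] (m n : ℕ) {w : ℕ} (t a : Fin w → ℕ)
    (d : (Fin m × Fin n) →₀ ℕ) (c : ∀ j : Fin w, Fin (t j) → Fin n) : Prop :=
  ∀ j : Fin w, IsSmallestDiagDividing K m n (t j) (a j)
    (monomial d (1 : K) * ∏ i : Fin w, if i ≤ j then diagP K m n (c i) else 1) (c j)

/-- An `S`-canonical NE-tableau of pattern `((t 0, a 0), …, (t (w-1), a (w-1)))`: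
a product of a monomial `X^d` and minors `δ_j` of the prescribed types satisfying
the canonicity condition. -/
def IsCanonicalTableau (K : Type*) [Field K] (m n : ℕ) {w : ℕ} (t a : Fin w → ℕ)
    (f : MvPolynomial (Fin m × Fin n) K) : Prop :=
  ∃ (d : (Fin m × Fin n) →₀ ℕ) (c : ∀ j : Fin w, Fin (t j) → Fin n),
    (∀ j, NEcols n (t j) (a j) (c j)) ∧
    f = monomial d (1 : K) * ∏ j, minorP K m n (c j) ∧
    CanonicalData K m n t a d c

section Aux

open Finset

lemma diagP_eq_prod (K : Type*) [Field K] {m n t : ℕ} (ht : t ≤ m) (c : Fin t → Fin n) :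
    diagP K m n c = ∏ r : Fin t,
      (X (⟨(r : ℕ), lt_of_lt_of_le r.2 ht⟩, c r) : MvPolynomial (Fin m × Fin n) K) := by
  unfold diagP
  exact Finset.prod_congr rfl fun r _ => dif_pos _

/-- Exponent vector of the diagonal monomial. -/
noncomputable def diagE (m n : ℕ) {t : ℕ} (ht : t ≤ m) (c : Fin t → Fin n) :
    (Fin m × Fin n) →₀ ℕ :=
  ∑ r : Fin t, Finsupp.single (⟨(r : ℕ), lt_of_lt_of_le r.2 ht⟩, c r) 1

lemma prod_monomial_one (K : Type*) [Field K] {m n : ℕ} {ι : Type*} (s : Finset ι)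
    (f : ι → ((Fin m × Fin n) →₀ ℕ)) :
    (∏ i ∈ s, (monomial (f i) (1 : K))) = monomial (∑ i ∈ s, f i) (1 : K) := by
  classical
  induction s using Finset.induction_on with
  | empty => simp
  | insert _ _ h ih => rw [Finset.prod_insert h, Finset.sum_insert h, ih, monomial_mul, one_mul]

lemma diagP_eq_monomial (K : Type*) [Field K] {m n t : ℕ} (ht : t ≤ m) (c : Fin t → Fin n) :
    diagP K m n c = monomial (diagE m n ht c) (1 : K) := by
  rw [diagP_eq_prod K ht c, diagE, ← prod_monomial_one]
  rfl

lemma diagE_apply_ne_zero_iff {m n t : ℕ} (ht : t ≤ m) (c : Fin t → Fin n)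
    (p : Fin m × Fin n) :
    diagE m n ht c p ≠ 0 ↔ ∃ r : Fin t, (r : ℕ) = (p.1 : ℕ) ∧ c r = p.2 := by
  classical
  obtain ⟨p1, p2⟩ := p
  rw [diagE, Finsupp.finset_sum_apply, Ne, Finset.sum_eq_zero_iff]
  push_neg
  constructor
  · rintro ⟨r, -, hr⟩
    rw [Finsupp.single_apply] at hr
    split_ifs at hr with h
    · refine ⟨r, ?_, ?_⟩
      · rw [Prod.mk.injEq] at h
        rw [← h.1]
      · rw [Prod.mk.injEq] at h
        exact h.2
    · exact absurd rfl hr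
  · rintro ⟨r, h1, h2⟩
    refine ⟨r, Finset.mem_univ r, ?_⟩
    rw [Finsupp.single_apply, if_pos]
    · exact one_ne_zero
    · exact Prod.ext (Fin.ext h1) h2

end Aux

/-- Lemma 4. Let `S` be a NE-pattern and `X^d · δ_1 ⋯ δ_w` a NE-tableau
of pattern `S` (with `δ_j` the minor with columns `c j`) which is not `S`-canonical. Then
(1) there are a variable `x_p` dividing `X^d` and an index `k` such that `x_p · δ_k` is not
a canonical NE-tableau of pattern `((t k, a k))`, or (2) there are indices `q < k` such
that `δ_q · δ_k` is not a canonical NE-tableau of pattern `((t q, a q), (t k, a k))`. -/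

theorem not_canonical_cases (K : Type*) [Field K] (m n : ℕ) (hm : 1 ≤ m) (hmn : m ≤ n)
    (w : ℕ) (t a : Fin w → ℕ) (hval : ∀ j, ValidPair m n (t j, a j))
    (hord : ∀ i j : Fin w, i < j → a i ≤ a j ∧ (a i = a j → t j ≤ t i))
    (d : (Fin m × Fin n) →₀ ℕ) (c : ∀ j : Fin w, Fin (t j) → Fin n)
    (hc : ∀ j, NEcols n (t j) (a j) (c j))
    (hnc : ¬ CanonicalData K m n t a d c) :
    (∃ (p : Fin m × Fin n) (k : Fin w), d p ≠ 0 ∧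
        ¬ IsSmallestDiagDividing K m n (t k) (a k) (X p * diagP K m n (c k)) (c k)) ∨
    (∃ q k : Fin w, q < k ∧
        ¬ (IsSmallestDiagDividing K m n (t q) (a q) (diagP K m n (c q)) (c q) ∧
           IsSmallestDiagDividing K m n (t k) (a k)
             (diagP K m n (c q) * diagP K m n (c k)) (c k))) := by
  by_contra hcon
  push_neg at hcon
  obtain ⟨H1, H2⟩ := hcon
  apply hnc
  intro j
  have htj : t j ≤ m := (hval j).2.2.1
  have htj1 : 1 ≤ t j := (hval j).1
  refine ⟨hc j, ?_, ?_⟩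
  · refine dvd_mul_of_dvd_right ?_ _
    have h := Finset.dvd_prod_of_mem
      (fun i => if i ≤ j then diagP K m n (c i) else 1) (Finset.mem_univ j)
    simpa using h
  · intro c' hc' hdvd'
    by_contra hnot
    push_neg at hnot
    obtain ⟨hne, hge⟩ := hnot
    -- the first index where c' differs from c j
    have hFne : (Finset.univ.filter (fun r : Fin (t j) => c' r ≠ c j r)).Nonempty := by
      obtain ⟨r, hr⟩ := Function.ne_iff.mp hne
      exact ⟨r, by simp [hr]⟩
    set j₀ : Fin (t j) := (Finset.univ.filter (fun r : Fin (t j) => c' r ≠ c j r)).min' hFne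
      with hj₀
    have hj₀mem : c' j₀ ≠ c j j₀ :=
      (Finset.mem_filter.mp (Finset.min'_mem _ hFne)).2
    have hj₀min : ∀ i < j₀, c' i = c j i := by
      intro i hi
      by_contra hcontra
      exact absurd (Finset.min'_le _ i
        (Finset.mem_filter.mpr ⟨Finset.mem_univ _, hcontra⟩)) (not_le.mpr hi)
    have hbeat : c j j₀ < c' j₀ := lt_of_le_of_ne (hge j₀ hj₀min) (Ne.symm hj₀mem)
    -- the exchange index ℓ
    have hGne : (Finset.univ.filter (fun r : Fin (t j) =>
        j₀ ≤ r ∧ ((r : ℕ) + 1 = t j ∨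
          ∀ h : (r : ℕ) + 1 < t j, c' r < c j ⟨(r : ℕ) + 1, h⟩))).Nonempty := by
      refine ⟨⟨t j - 1, Nat.sub_lt (lt_of_lt_of_le one_pos htj1) one_pos⟩, ?_⟩
      refine Finset.mem_filter.mpr ⟨Finset.mem_univ _, ?_, Or.inl ?_⟩
      · exact Fin.le_def.mpr (Nat.le_pred_of_lt j₀.2)
      · exact Nat.succ_pred_eq_of_pos (lt_of_lt_of_le one_pos htj1)
    set ℓ : Fin (t j) := (Finset.univ.filter (fun r : Fin (t j) =>
        j₀ ≤ r ∧ ((r : ℕ) + 1 = t j ∨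
          ∀ h : (r : ℕ) + 1 < t j, c' r < c j ⟨(r : ℕ) + 1, h⟩))).min' hGne with hℓdef
    obtain ⟨-, hj₀ℓ, hℓprop⟩ := Finset.mem_filter.mp (Finset.min'_mem _ hGne)
    rw [← hℓdef] at hj₀ℓ hℓprop
    have hupper : ∀ h : (ℓ : ℕ) + 1 < t j, c' ℓ < c j ⟨(ℓ : ℕ) + 1, h⟩ := by
      intro h
      rcases hℓprop with h1 | h2
      · omega
      · exact h2 h
    have hlt : c j ℓ < c' ℓ := by
      rcases eq_or_lt_of_le hj₀ℓ with heq | hltj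
      · rw [← heq]; exact hbeat
      · have hℓpos : 0 < (ℓ : ℕ) := lt_of_le_of_lt (Nat.zero_le _) (Fin.lt_def.mp hltj)
        set ℓ' : Fin (t j) := ⟨(ℓ : ℕ) - 1, lt_of_le_of_lt (Nat.sub_le _ _) ℓ.2⟩ with hℓ'
        have hℓ'lt : ℓ' < ℓ := Fin.lt_def.mpr (Nat.sub_lt hℓpos one_pos)
        have hnotG : ℓ' ∉ Finset.univ.filter (fun r : Fin (t j) =>
            j₀ ≤ r ∧ ((r : ℕ) + 1 = t j ∨
              ∀ h : (r : ℕ) + 1 < t j, c' r < c j ⟨(r : ℕ) + 1, h⟩)) := fun hmem =>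
          absurd (Finset.min'_le _ ℓ' hmem) (not_le.mpr hℓ'lt)
        rw [Finset.mem_filter] at hnotG
        push_neg at hnotG
        have hj₀ℓ' : j₀ ≤ ℓ' := Fin.le_def.mpr (Nat.le_pred_of_lt (Fin.lt_def.mp hltj))
        have hno2 := hnotG (Finset.mem_univ _) hj₀ℓ'
        obtain ⟨-, hh, hnotlt⟩ := hno2
        have hfineq : (⟨(ℓ' : ℕ) + 1, hh⟩ : Fin (t j)) = ℓ := by
          apply Fin.ext
          simp only [hℓ']
          omega
        rw [hfineq] at hnotlt
        exact lt_of_le_of_lt hnotlt (hc'.1 hℓ'lt)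
    have hℓm : (ℓ : ℕ) < m := lt_of_lt_of_le ℓ.2 htj
    -- the variable at row ℓ of c'
    set v : Fin m × Fin n := (⟨(ℓ : ℕ), hℓm⟩, c' ℓ) with hv
    -- monomial form of M
    have hM : (monomial d (1 : K)) * ∏ i : Fin w, (if i ≤ j then diagP K m n (c i) else 1)
        = monomial (d + ∑ i : Fin w,
            if i ≤ j then diagE m n ((hval i).2.2.1) (c i) else 0) (1 : K) := by
      have h1 : ∀ i : Fin w, (if i ≤ j then diagP K m n (c i) else 1)
          = monomial (if i ≤ j then diagE m n ((hval i).2.2.1) (c i) else 0) (1 : K) := by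
        intro i
        split_ifs with h
        · exact diagP_eq_monomial K ((hval i).2.2.1) (c i)
        · simp
      rw [Finset.prod_congr rfl (fun i _ => h1 i), prod_monomial_one, monomial_mul, one_mul]
    rw [hM, diagP_eq_monomial K htj c', monomial_one_dvd_monomial_one] at hdvd'
    have hvpos : diagE m n htj c' v ≠ 0 :=
      (diagE_apply_ne_zero_iff htj c' v).mpr ⟨ℓ, rfl, rfl⟩
    have hDv : (d + ∑ i : Fin w,
        if i ≤ j then diagE m n ((hval i).2.2.1) (c i) else 0) v ≠ 0 := by
      intro h0
      exact hvpos (Nat.le_zero.mp (h0 ▸ (Finsupp.le_def.mp hdvd') v))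
    have hsource : d v ≠ 0 ∨
        ∃ i : Fin w, i ≤ j ∧ diagE m n ((hval i).2.2.1) (c i) v ≠ 0 := by
      by_contra hno
      push_neg at hno
      obtain ⟨hd0, hall⟩ := hno
      apply hDv
      rw [Finsupp.add_apply, hd0, zero_add, Finsupp.finset_sum_apply]
      apply Finset.sum_eq_zero
      intro i _
      by_cases hij : i ≤ j
      · rw [if_pos hij]; exact hall i hij
      · rw [if_neg hij]; rfl
    -- the exchanged column selection c''
    set c'' : Fin (t j) → Fin n := Function.update (c j) ℓ (c' ℓ) with hc''def
    have hc''ℓ : c'' ℓ = c' ℓ := Function.update_self ℓ (c' ℓ) (c j)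
    have hc''ne : ∀ r, r ≠ ℓ → c'' r = c j r := fun r hr =>
      Function.update_of_ne hr (c' ℓ) (c j)
    have hmono'' : StrictMono c'' := by
      intro r s hrs
      rcases eq_or_ne r ℓ with heqr | hner
      · rcases eq_or_ne s ℓ with heqs | hnes
        · rw [heqr, heqs] at hrs
          exact absurd hrs (lt_irrefl ℓ)
        · rw [heqr, hc''ℓ, hc''ne s hnes]
          have hℓs : ℓ < s := by rw [← heqr]; exact hrs
          have h1 : (ℓ : ℕ) + 1 < t j :=
            lt_of_le_of_lt (Nat.succ_le_of_lt (Fin.lt_def.mp hℓs)) s.2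
          exact lt_of_lt_of_le (hupper h1)
            ((hc j).1.monotone (Fin.le_def.mpr (Nat.succ_le_of_lt (Fin.lt_def.mp hℓs))))
      · rcases eq_or_ne s ℓ with heqs | hnes
        · rw [hc''ne r hner, heqs, hc''ℓ]
          exact lt_trans ((hc j).1 (heqs ▸ hrs)) hlt
        · rw [hc''ne r hner, hc''ne s hnes]
          exact (hc j).1 hrs
    have ha'' : ∀ r, a j ≤ (c'' r : ℕ) + 1 := by
      intro r
      rcases eq_or_ne r ℓ with heqr | hner
      · rw [heqr, hc''ℓ]; exact hc'.2 ℓ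
      · rw [hc''ne r hner]; exact (hc j).2 r
    have hNE'' : NEcols n (t j) (a j) c'' := ⟨hmono'', ha''⟩
    -- c'' beats c j, contradicting the lex-maximality clauses
    have hlex : ¬(c'' = c j ∨
        ∃ r : Fin (t j), (∀ i < r, c'' i = c j i) ∧ c'' r < c j r) := by
      rintro (heq | ⟨r, hpre, hr⟩)
      · have h := congrFun heq ℓ
        rw [hc''ℓ] at h
        exact absurd h (ne_of_gt hlt)
      · rcases lt_trichotomy r ℓ with h | h | h
        · rw [hc''ne r (ne_of_lt h)] at hr
          exact absurd hr (lt_irrefl _)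
        · rw [h, hc''ℓ] at hr
          exact absurd hr (not_lt.mpr (le_of_lt hlt))
        · have h2 := hpre ℓ h
          rw [hc''ℓ] at h2
          exact absurd h2 (ne_of_gt hlt)
    -- splitting off the factor at row ℓ
    have hsplit : ∀ cc : Fin (t j) → Fin n,
        diagP K m n cc = (X (⟨(ℓ : ℕ), lt_of_lt_of_le ℓ.2 htj⟩, cc ℓ) :
            MvPolynomial (Fin m × Fin n) K) *
          ∏ r ∈ Finset.univ.erase ℓ,
            (X (⟨(r : ℕ), lt_of_lt_of_le r.2 htj⟩, cc r) :
              MvPolynomial (Fin m × Fin n) K) := by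
      intro cc
      rw [diagP_eq_prod K htj cc]
      exact (Finset.mul_prod_erase _ _ (Finset.mem_univ ℓ)).symm
    have herase : (∏ r ∈ Finset.univ.erase ℓ,
          (X (⟨(r : ℕ), lt_of_lt_of_le r.2 htj⟩, c'' r) :
            MvPolynomial (Fin m × Fin n) K))
        = ∏ r ∈ Finset.univ.erase ℓ,
            (X (⟨(r : ℕ), lt_of_lt_of_le r.2 htj⟩, c j r) :
              MvPolynomial (Fin m × Fin n) K) :=
      Finset.prod_congr rfl fun r hr => by rw [hc''ne r (Finset.ne_of_mem_erase hr)]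
    rcases hsource with hd | ⟨i, hij, hi⟩
    · -- case (1): variable from the monomial part
      have hIs := H1 v j hd
      have hdvd'' : diagP K m n c'' ∣ X v * diagP K m n (c j) := by
        rw [hsplit c'', hsplit (c j), hc''ℓ, herase]
        exact mul_dvd_mul_left _ (dvd_mul_left _ _)
      exact hlex (hIs.2.2 c'' hNE'' hdvd'')
    · -- case (2): variable from an earlier diagonal
      obtain ⟨r₀, hr₀, hcr₀⟩ := (diagE_apply_ne_zero_iff ((hval i).2.2.1) (c i) v).mp hi
      have hine : i ≠ j := by
        rintro rfl
        have hreq : r₀ = ℓ := Fin.ext hr₀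
        rw [hreq] at hcr₀
        exact absurd hcr₀ (ne_of_lt hlt)
      have hij' : i < j := lt_of_le_of_ne hij hine
      have hXdvd : (X v : MvPolynomial (Fin m × Fin n) K) ∣ diagP K m n (c i) := by
        rw [diagP_eq_prod K ((hval i).2.2.1) (c i)]
        have hveq : v = (⟨(r₀ : ℕ), lt_of_lt_of_le r₀.2 ((hval i).2.2.1)⟩, c i r₀) :=
          Prod.ext (Fin.ext hr₀.symm) hcr₀.symm
        rw [hveq]
        exact Finset.dvd_prod_of_mem _ (Finset.mem_univ r₀)
      have hdvd'' : diagP K m n c'' ∣ diagP K m n (c i) * diagP K m n (c j) := by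
        rw [hsplit c'', hc''ℓ, hsplit (c j), herase]
        exact mul_dvd_mul hXdvd (dvd_mul_left _ _)
      exact hlex ((H2 i j hij').2.2.2 c'' hNE'' hdvd'')
end
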